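/- arXiv:2412.13325 — 3 statements merged into one kernel-verified Lean document; each statement's English description precedes it below -/
import Mathlib

section
/- Let G = ⟨e₁,e₂⟩ ≅ ℤ², g ∈ {e₁, e₂, e₁e₂}, and consider commutators f = [x_g, y₁^{(k₁)}, …, y_n^{(k_n)}] and h = [x_g, y₁^{(k'₁)}, …, y_m^{(k'_m)}], where 0 ≤ k₁, …, k_n, k'₁, …, k'_m < |K|. To such a commutator f associate the sequence S_f = (k₁, …, k_n) ∈ D(ℕ₀). If S_f ⪯ S_h in the Higman order on D(ℕ₀), then h ∈ ⟨f⟩^{T_G} + Id_G(UT₃⁽⁻⁾, Γ(e₁,e₂)). -/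
open FreeLieAlgebra

/-- The free `G`-graded Lie algebra over `K` on variables `x_{i,g}`, `i ∈ ℕ`, `g ∈ G`. -/
abbrev FL (K : Type*) [Field K] (G : Type*) := FreeLieAlgebra K (ℕ × G)

section Framework

variable (K : Type*) [Field K] (G : Type*) [CommGroup G]

/-- `IsHom K G g a` : `a` is homogeneous of degree `g` in the free graded Lie algebra. -/
inductive IsHom : G → FL K G → Prop
  | var (i : ℕ) (g : G) : IsHom g (of K (i, g))
  | zero (g : G) : IsHom g 0
  | add {g : G} {a b : FL K G} : IsHom g a → IsHom g b → IsHom g (a + b)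
  | smul {g : G} {a : FL K G} (c : K) : IsHom g a → IsHom g (c • a)
  | lie {g h : G} {a b : FL K G} : IsHom g a → IsHom h b → IsHom (g * h) ⁅a, b⁆

/-- A graded substitution: an endomorphism sending each variable `x_{i,g}` to a homogeneous
element of degree `g`. -/
def IsGradedSubst (φ : FL K G →ₗ⁅K⁆ FL K G) : Prop :=
  ∀ (i : ℕ) (g : G), IsHom K G g (φ (of K (i, g)))

/-- A `T_G`-ideal: a Lie ideal invariant under all graded substitutions. -/
def IsTIdeal (I : LieIdeal K (FL K G)) : Prop :=
  ∀ φ : FL K G →ₗ⁅K⁆ FL K G, IsGradedSubst K G φ → ∀ a ∈ I, φ a ∈ I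

/-- The `T_G`-ideal generated by a set `S`. -/
noncomputable def tClosure (S : Set (FL K G)) : LieIdeal K (FL K G) :=
  sInf {I : LieIdeal K (FL K G) | IsTIdeal K G I ∧ S ⊆ ↑I}

/-- The graded polynomial identities of a `G`-graded Lie algebra `(A, Γ)`, as a Lie ideal of the
free graded Lie algebra. -/
def gradedIdeal (A : Type*) [LieRing A] [LieAlgebra K A] (Γ : G → Submodule K A) :
    LieIdeal K (FL K G) where
  carrier := {f | ∀ ψ : FL K G →ₗ⁅K⁆ A, (∀ (i : ℕ) (g : G), ψ (of K (i, g)) ∈ Γ g) → ψ f = 0}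
  add_mem' := by
    intro a b ha hb ψ hψ
    rw [map_add ψ, ha ψ hψ, hb ψ hψ, add_zero]
  zero_mem' := by
    intro ψ _
    exact ψ.map_zero
  smul_mem' := by
    intro c a ha ψ hψ
    rw [map_smul ψ, ha ψ hψ, smul_zero]
  lie_mem := by
    intro x m hm ψ hψ
    rw [ψ.map_lie, hm ψ hψ, lie_zero]

/-- Left-normed iterated commutator `[x, l₁, l₂, …]`. -/
noncomputable def lnorm (x : FL K G) (l : List (FL K G)) : FL K G := l.foldl (fun a b => ⁅a, b⁆) x

/-- The list `y₁^{(p₁)}, …, y_r^{(p_r)}` of trivial-degree variables with multiplicities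
(0-indexed: the variables are `x_{0,1}, …, x_{r-1,1}`). -/
noncomputable def yRun (p : ℕ → ℕ) : ℕ → List (FL K G)
  | 0 => []
  | n + 1 => yRun p n ++ List.replicate (p n) (of K (n, (1 : G)))

attribute [local instance] LieRing.ofAssociativeRing LieAlgebra.ofAssociativeAlgebra

/-- 3×3 matrices. -/
abbrev M3 (K : Type*) [Field K] := Matrix (Fin 3) (Fin 3) K

/-- Matrix units. -/
def E3 (i j : Fin 3) : M3 K := Matrix.single i j 1

/-- The elementary grading `Γ(g,h)` on upper triangular 3×3 matrices:
`deg e₁₁ = deg e₂₂ = deg e₃₃ = 1`, `deg e₁₂ = g`, `deg e₂₃ = h`, `deg e₁₃ = gh`.  The component of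
degree `l` is the span of the matrix units of degree `l`. -/
def utGrading (g h : G) : G → Submodule K (M3 K) := fun l =>
  Submodule.span K {m : M3 K |
    (l = 1 ∧ (m = E3 K 0 0 ∨ m = E3 K 1 1 ∨ m = E3 K 2 2)) ∨
    (l = g ∧ m = E3 K 0 1) ∨ (l = h ∧ m = E3 K 1 2) ∨ (l = g * h ∧ m = E3 K 0 2)}

/-- The support of the grading `Γ(g,h)`. -/
def utSupp (g h : G) : Set G := {l | utGrading K G g h l ≠ ⊥}

/-- The graded identities `Id_G(UT₃⁽⁻⁾, Γ(g,h))`. -/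
def IdUT3 (g h : G) : LieIdeal K (FL K G) := gradedIdeal K G (M3 K) (utGrading K G g h)

/-- 2×2 matrices. -/
abbrev M2 (K : Type*) [Field K] := Matrix (Fin 2) (Fin 2) K

/-- Matrix units. -/
def E2 (i j : Fin 2) : M2 K := Matrix.single i j 1

/-- The space of upper triangular 2×2 matrices, `UT₂⁽⁻⁾`. -/
def ut2 : Submodule K (M2 K) := Submodule.span K {E2 K 0 0, E2 K 1 1, E2 K 0 1}

/-- Ordinary (ungraded) Lie polynomial identities of `UT₂⁽⁻⁾`. -/
def IdUT2 : Set (FL K G) :=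
  {f | ∀ ψ : FL K G →ₗ⁅K⁆ M2 K, (∀ (i : ℕ) (g : G), ψ (of K (i, g)) ∈ ut2 K) → ψ f = 0}

/-- The free Lie subalgebra `L(Y)` on the trivial-degree variables. -/
noncomputable def LY : LieSubalgebra K (FL K G) :=
  LieSubalgebra.lieSpan K (FL K G) {a | ∃ i : ℕ, a = of K (i, (1 : G))}

/-- Exponent bound: `0 ≤ p ℓ < |K|` when `K` is finite (no bound when `K` is infinite). -/
def expOK (r : ℕ) (p : ℕ → ℕ) : Prop := ∀ ℓ < r, Finite K → p ℓ < Nat.card K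

end Framework

/-! ## Statement 3 : Higman-order consequence for one-`x` commutators, universal grading -/

/-- The Higman order on finite sequences: `l₁ ⪯ l₂` iff `l₂` has a sublist that dominates `l₁`
pointwise. -/
def Higman {α : Type*} (le : α → α → Prop) (l₁ l₂ : List α) : Prop :=
  ∃ l : List α, l.Sublist l₂ ∧ List.Forall₂ le l₁ l

/-- The free abelian group of rank 2, `G = ⟨e₁, e₂⟩ ≅ ℤ²` (multiplicative notation). -/
abbrev Gu : Type := Multiplicative (ℤ × ℤ)

/-- The first free generator. -/
def e1 : Gu := Multiplicative.ofAdd (1, 0)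

/-- The second free generator. -/
def e2 : Gu := Multiplicative.ofAdd (0, 1)


/-! ## Auxiliary lemmas -/

attribute [local instance] LieRing.ofAssociativeRing LieAlgebra.ofAssociativeAlgebra

section Aux

variable {K : Type*} [Field K]

lemma E3_lie_diag (p q r : Fin 3) :
    ⁅E3 K p q, E3 K r r⁆ = ((E3 K r r) q q - (E3 K r r) p p) • E3 K p q := by
  unfold E3
  rw [Ring.lie_def]
  by_cases hq : q = r <;> by_cases hp : p = r
  · subst hq; subst hp
    simp
  · subst hq
    rw [Matrix.single_mul_single_same, Matrix.single_mul_single_of_ne (h := Ne.symm hp)]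
    rw [Matrix.single_apply_same,
      Matrix.single_apply_of_ne _ _ _ _ _ (fun hc => hp hc.1.symm)]
    simp
  · subst hp
    rw [Matrix.single_mul_single_of_ne (h := hq), Matrix.single_mul_single_same]
    rw [Matrix.single_apply_same,
      Matrix.single_apply_of_ne _ _ _ _ _ (fun hc => hq hc.1.symm)]
    rw [zero_sub, zero_sub, one_mul, neg_smul, one_smul]
  · rw [Matrix.single_mul_single_of_ne (h := hq),
      Matrix.single_mul_single_of_ne (h := Ne.symm hp)]
    rw [Matrix.single_apply_of_ne _ _ _ _ _ (fun hc => hq hc.1.symm),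
      Matrix.single_apply_of_ne _ _ _ _ _ (fun hc => hp hc.1.symm)]
    simp

lemma lie_unit_diag (p q : Fin 3) {D : M3 K} (hD : D ∈ utGrading K Gu e1 e2 1) :
    ⁅E3 K p q, D⁆ = (D q q - D p p) • E3 K p q := by
  have h1 : (1 : Gu) ≠ e1 := by decide
  have h2 : (1 : Gu) ≠ e2 := by decide
  have h3 : (1 : Gu) ≠ e1 * e2 := by decide
  induction hD using Submodule.span_induction with
  | mem m hm =>
    rcases hm with ⟨-, (rfl | rfl | rfl)⟩ | ⟨hc, -⟩ | ⟨hc, -⟩ | ⟨hc, -⟩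
    · exact E3_lie_diag p q 0
    · exact E3_lie_diag p q 1
    · exact E3_lie_diag p q 2
    · exact absurd hc h1
    · exact absurd hc h2
    · exact absurd hc h3
  | zero => simp
  | add a b _ _ ha hb =>
    rw [lie_add, ha, hb, Matrix.add_apply, Matrix.add_apply, ← add_smul]
    ring_nf
  | smul c a _ ha =>
    rw [lie_smul, ha, Matrix.smul_apply, Matrix.smul_apply, smul_smul]
    simp only [smul_eq_mul]
    ring_nf

lemma foldl_lie_replicate (p q : Fin 3) {D : M3 K} (hD : D ∈ utGrading K Gu e1 e2 1) :
    ∀ (t : ℕ) (c : K),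
      List.foldl (fun a b => ⁅a, b⁆) (c • E3 K p q) (List.replicate t D) =
        (c * (D q q - D p p) ^ t) • E3 K p q
  | 0, c => by simp
  | t + 1, c => by
    rw [List.replicate_succ, List.foldl_cons, smul_lie, lie_unit_diag p q hD, smul_smul,
      foldl_lie_replicate p q hD t _, pow_succ]
    ring_nf

lemma lieHom_foldl {A : Type*} [LieRing A] [LieAlgebra K A] (θ : FL K Gu →ₗ⁅K⁆ A) :
    ∀ (l : List (FL K Gu)) (x : FL K Gu),
      θ (List.foldl (fun a b => ⁅a, b⁆) x l) =
        List.foldl (fun a b => ⁅a, b⁆) (θ x) (l.map θ)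
  | [], x => by simp
  | a :: l, x => by
    rw [List.foldl_cons, List.map_cons, List.foldl_cons, lieHom_foldl θ l, θ.map_lie]

lemma lnorm_append {G : Type*} [CommGroup G] (x : FL K G) (l₁ l₂ : List (FL K G)) :
    lnorm K G x (l₁ ++ l₂) = lnorm K G (lnorm K G x l₁) l₂ :=
  List.foldl_append

lemma lieHom_lnorm {A : Type*} [LieRing A] [LieAlgebra K A] (θ : FL K Gu →ₗ⁅K⁆ A)
    (l : List (FL K Gu)) (x : FL K Gu) :
    θ (lnorm K Gu x l) = List.foldl (fun a b => ⁅a, b⁆) (θ x) (l.map θ) :=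
  lieHom_foldl θ l x

lemma eval_yRun (θ : FL K Gu →ₗ⁅K⁆ M3 K)
    (hdiag : ∀ ℓ : ℕ, θ (of K (ℓ, (1 : Gu))) ∈ utGrading K Gu e1 e2 1)
    (p q : Fin 3) (P : ℕ → ℕ) :
    ∀ (r : ℕ) (x : FL K Gu) (c : K), θ x = c • E3 K p q →
      θ (lnorm K Gu x (yRun K Gu P r)) =
        (c * ∏ ℓ ∈ Finset.range r,
          ((θ (of K (ℓ, (1 : Gu)))) q q - (θ (of K (ℓ, (1 : Gu)))) p p) ^ P ℓ) • E3 K p q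
  | 0, x, c, hx => by simpa [lnorm, yRun] using hx
  | r + 1, x, c, hx => by
    have hrec := eval_yRun θ hdiag p q P r x c hx
    rw [yRun, lnorm_append, lieHom_lnorm θ, List.map_replicate, hrec,
      foldl_lie_replicate p q (hdiag r), Finset.prod_range_succ, mul_assoc]

lemma isHom_foldl_replicate (g : Gu) (ℓ : ℕ) :
    ∀ (t : ℕ) (a : FL K Gu), IsHom K Gu g a →
      IsHom K Gu g (List.foldl (fun a b => ⁅a, b⁆)
        a (List.replicate t (of K (ℓ, (1 : Gu)))))
  | 0, a, ha => ha
  | t + 1, a, ha => by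
    rw [List.replicate_succ, List.foldl_cons]
    exact isHom_foldl_replicate g ℓ t _ (mul_one g ▸ IsHom.lie ha (IsHom.var ℓ 1))

lemma isHom_lnorm_yRun (g : Gu) (P : ℕ → ℕ) :
    ∀ (r : ℕ) (x : FL K Gu), IsHom K Gu g x →
      IsHom K Gu g (lnorm K Gu x (yRun K Gu P r))
  | 0, x, hx => hx
  | r + 1, x, hx => by
    rw [yRun, lnorm_append]
    exact isHom_foldl_replicate g r (P r) _ (isHom_lnorm_yRun g P r x hx)

lemma grading_one_ne : (1 : Gu) ≠ e1 ∧ (1 : Gu) ≠ e2 ∧ (1 : Gu) ≠ e1 * e2 := by decide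

lemma grading_g {g : Gu} (hg : g ∈ ({e1, e2, e1 * e2} : Set Gu)) :
    ∃ p q : Fin 3, utGrading K Gu e1 e2 g = Submodule.span K {E3 K p q} := by
  rcases hg with rfl | rfl | rfl
  · refine ⟨0, 1, ?_⟩
    unfold utGrading
    congr 1
    ext m
    simp [show e1 ≠ (1 : Gu) by decide, show e1 ≠ e2 by decide,
      show e1 ≠ e1 * e2 by decide]
  · refine ⟨1, 2, ?_⟩
    unfold utGrading
    congr 1
    ext m
    simp [show e2 ≠ (1 : Gu) by decide, show e2 ≠ e1 by decide,
      show e2 ≠ e1 * e2 by decide]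
  · refine ⟨0, 2, ?_⟩
    unfold utGrading
    congr 1
    ext m
    simp [show e1 * e2 ≠ (1 : Gu) by decide, show e1 * e2 ≠ e1 by decide,
      show e1 * e2 ≠ e2 by decide]

lemma mem_gradedIdeal_iff {G : Type*} [CommGroup G] {A : Type*} [LieRing A] [LieAlgebra K A]
    (Γ : G → Submodule K A) (x : FL K G) :
    x ∈ gradedIdeal K G A Γ ↔
      ∀ ψ : FL K G →ₗ⁅K⁆ A, (∀ (i : ℕ) (g : G), ψ (of K (i, g)) ∈ Γ g) → ψ x = 0 :=
  Iff.rfl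

lemma mem_tClosure_of_subst {G : Type*} [CommGroup G] {S : Set (FL K G)} {f : FL K G}
    (hf : f ∈ S) {φ : FL K G →ₗ⁅K⁆ FL K G} (hφ : IsGradedSubst K G φ) :
    φ f ∈ tClosure K G S := by
  unfold tClosure
  have : φ f ∈ (↑(sInf {I : LieIdeal K (FL K G) | IsTIdeal K G I ∧ S ⊆ ↑I}) : Set (FL K G)) := by
    rw [LieSubmodule.coe_sInf]
    refine Set.mem_iInter₂.2 fun I hI => ?_
    exact hI.1 φ hφ f (hI.2 hf)
  exact this

lemma prod_split (μ : ℕ → K) (n m : ℕ) (k k' : ℕ → ℕ) (ψH : ℕ → ℕ)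
    (hlt : ∀ i, i < n → ψH i < m)
    (hinj : ∀ i₁, i₁ < n → ∀ i₂, i₂ < n → ψH i₁ = ψH i₂ → i₁ = i₂)
    (hle : ∀ i, i < n → k i ≤ k' (ψH i)) :
    (∏ j ∈ Finset.range m,
        μ j ^ (k' j - ∑ i ∈ (Finset.range n).filter (fun i => ψH i = j), k i)) *
      ∏ i ∈ Finset.range n, μ (ψH i) ^ k i
    = ∏ j ∈ Finset.range m, μ j ^ k' j := by
  have hTle : ∀ j, (∑ i ∈ (Finset.range n).filter (fun i => ψH i = j), k i) ≤ k' j := by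
    intro j
    rcases Finset.eq_empty_or_nonempty ((Finset.range n).filter (fun i => ψH i = j)) with
      he | ⟨i₀, hi₀⟩
    · simp [he]
    · have hi₀' := Finset.mem_filter.1 hi₀
      have hi₀n : i₀ < n := Finset.mem_range.1 hi₀'.1
      have hset : (Finset.range n).filter (fun i => ψH i = j) = {i₀} := by
        apply Finset.eq_singleton_iff_unique_mem.2
        refine ⟨hi₀, fun i hi => ?_⟩
        have hi' := Finset.mem_filter.1 hi
        exact hinj i (Finset.mem_range.1 hi'.1) i₀ hi₀n (hi'.2.trans hi₀'.2.symm)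
      rw [hset, Finset.sum_singleton, ← hi₀'.2]
      exact hle i₀ hi₀n
  have h2 : (∏ i ∈ Finset.range n, μ (ψH i) ^ k i)
      = ∏ j ∈ Finset.range m,
          μ j ^ (∑ i ∈ (Finset.range n).filter (fun i => ψH i = j), k i) := by
    rw [← Finset.prod_fiberwise_of_maps_to
      (fun i hi => Finset.mem_range.2 (hlt i (Finset.mem_range.1 hi)))
      (fun i => μ (ψH i) ^ k i)]
    refine Finset.prod_congr rfl fun j _ => ?_
    rw [← Finset.prod_pow_eq_pow_sum]
    refine Finset.prod_congr rfl fun i hi => ?_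
    rw [(Finset.mem_filter.1 hi).2]
  rw [h2, ← Finset.prod_mul_distrib]
  refine Finset.prod_congr rfl fun j _ => ?_
  rw [← pow_add, Nat.sub_add_cancel (hTle j)]

end Aux

/-- **Lemma.** For `f = [x_g, y₁^{(k₁)}, …, y_n^{(k_n)}]` and
`h = [x_g, y₁^{(k'₁)}, …, y_m^{(k'_m)}]` with `0 ≤ kᵢ, k'ⱼ < |K|`, if
`S_f = (k₁,…,k_n) ⪯ (k'₁,…,k'_m) = S_h` in the Higman order, then
`h ∈ ⟨f⟩^{T_G} + Id_G(UT₃⁽⁻⁾, Γ(e₁,e₂))`. -/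
theorem stmt3 (K : Type*) [Field K] (g : Gu) (hg : g ∈ ({e1, e2, e1 * e2} : Set Gu))
    (n m : ℕ) (k k' : ℕ → ℕ) (hk : expOK K n k) (hk' : expOK K m k')
    (hH : Higman (· ≤ ·) ((List.range n).map k) ((List.range m).map k')) :
    lnorm K Gu (of K (0, g)) (yRun K Gu k' m) ∈
      tClosure K Gu {lnorm K Gu (of K (0, g)) (yRun K Gu k n)} ⊔ IdUT3 K Gu e1 e2 := by
  classical
  obtain ⟨l, hsub, hfa⟩ := hH
  have hlen : l.length = n := by simpa using hfa.length_eq.symm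
  rw [List.sublist_iff_exists_fin_orderEmbedding_get_eq] at hsub
  obtain ⟨emb, hemb⟩ := hsub
  set ψH : ℕ → ℕ := fun i => if h : i < n then ((emb ⟨i, by omega⟩) : ℕ) else m + i with hψH
  have hψHlt : ∀ i, i < n → ψH i < m := by
    intro i hi
    simp only [ψH, dif_pos hi]
    have := (emb ⟨i, by omega⟩).isLt
    simpa using this
  have hψHval : ∀ i (hi : i < n), k' (ψH i) = l.get ⟨i, by omega⟩ := by
    intro i hi
    have h2 := hemb ⟨i, by omega⟩
    simp only [ψH, dif_pos hi]
    rw [h2]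
    simp
  have hkle : ∀ i, i < n → k i ≤ k' (ψH i) := by
    intro i hi
    rw [List.forall₂_iff_get] at hfa
    have h3 := hfa.2 i (by simpa using hi) (by omega)
    rw [hψHval i hi]
    simpa using h3
  have hψHinj : ∀ i₁, i₁ < n → ∀ i₂, i₂ < n → ψH i₁ = ψH i₂ → i₁ = i₂ := by
    intro i₁ h₁ i₂ h₂ he
    simp only [ψH, dif_pos h₁, dif_pos h₂] at he
    exact congrArg Fin.val (emb.injective (Fin.val_injective he))
  set cf : ℕ → ℕ :=
    fun j => k' j - ∑ i ∈ (Finset.range n).filter (fun i => ψH i = j), k i with hcf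
  have hgne1 : g ≠ 1 := by rcases hg with rfl | rfl | rfl <;> decide
  set F : ℕ × Gu → FL K Gu := fun v =>
    if v.2 = (1 : Gu) ∧ v.1 < n then of K (ψH v.1, (1 : Gu))
    else if v = (0, g) then lnorm K Gu (of K (0, g)) (yRun K Gu cf m)
    else of K v with hF
  set φ : FL K Gu →ₗ⁅K⁆ FL K Gu := FreeLieAlgebra.lift K F with hφ
  have hφof : ∀ v, φ (of K v) = F v := fun v => by
    rw [hφ, FreeLieAlgebra.lift_of_apply]
  have hφx : φ (of K (0, g)) = lnorm K Gu (of K (0, g)) (yRun K Gu cf m) := by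
    rw [hφof]
    simp only [hF]
    rw [if_neg (fun hc => hgne1 hc.1)]
    simp
  have hφy : ∀ i, i < n → φ (of K (i, (1 : Gu))) = of K (ψH i, (1 : Gu)) := by
    intro i hi
    rw [hφof]
    simp only [hF]
    simp [hi]
  have hφy' : ∀ i : ℕ, ∃ i' : ℕ, φ (of K (i, (1 : Gu))) = of K (i', (1 : Gu)) := by
    intro i
    by_cases hi : i < n
    · exact ⟨ψH i, hφy i hi⟩
    · refine ⟨i, ?_⟩
      rw [hφof]
      simp only [hF]
      simp [hi, hgne1.symm]
  have hsubst : IsGradedSubst K Gu φ := by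
    intro i lg
    rw [hφof]
    simp only [hF]
    split_ifs with h1 h2
    · rw [show lg = (1 : Gu) from h1.1]
      exact IsHom.var _ _
    · rw [show lg = g from (Prod.ext_iff.1 h2).2]
      exact isHom_lnorm_yRun g cf m _ (IsHom.var 0 g)
    · exact IsHom.var i lg
  have hf_mem : φ (lnorm K Gu (of K (0, g)) (yRun K Gu k n)) ∈
      tClosure K Gu {lnorm K Gu (of K (0, g)) (yRun K Gu k n)} :=
    mem_tClosure_of_subst (Set.mem_singleton _) hsubst
  obtain ⟨p, q, hpq⟩ := grading_g (K := K) hg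
  have hid : lnorm K Gu (of K (0, g)) (yRun K Gu k' m)
      - φ (lnorm K Gu (of K (0, g)) (yRun K Gu k n)) ∈ IdUT3 K Gu e1 e2 := by
    rw [IdUT3, mem_gradedIdeal_iff]
    intro ψ hψ
    rw [map_sub]
    have hdiagψ : ∀ ℓ : ℕ, ψ (of K (ℓ, (1 : Gu))) ∈ utGrading K Gu e1 e2 1 :=
      fun ℓ => hψ ℓ 1
    obtain ⟨α, hα⟩ := Submodule.mem_span_singleton.1 (hpq ▸ hψ 0 g)
    have hx : ψ (of K (0, g)) = α • E3 K p q := hα.symm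
    have hevalh := eval_yRun ψ hdiagψ p q k' m (of K (0, g)) α hx
    set θ : FL K Gu →ₗ⁅K⁆ M3 K := ψ.comp φ with hθ
    have hθdiag : ∀ ℓ : ℕ, θ (of K (ℓ, (1 : Gu))) ∈ utGrading K Gu e1 e2 1 := by
      intro ℓ
      obtain ⟨ℓ', hℓ'⟩ := hφy' ℓ
      rw [hθ, LieHom.comp_apply, hℓ']
      exact hψ ℓ' 1
    have hθx : θ (of K (0, g)) =
        (α * ∏ j ∈ Finset.range m,
          ((ψ (of K (j, (1 : Gu)))) q q - (ψ (of K (j, (1 : Gu)))) p p) ^ cf j) • E3 K p q := by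
      rw [hθ, LieHom.comp_apply, hφx]
      exact eval_yRun ψ hdiagψ p q cf m (of K (0, g)) α hx
    have hevalf := eval_yRun θ hθdiag p q k n (of K (0, g)) _ hθx
    have hψφ : ψ (φ (lnorm K Gu (of K (0, g)) (yRun K Gu k n)))
        = θ (lnorm K Gu (of K (0, g)) (yRun K Gu k n)) := rfl
    rw [hψφ, hevalf, hevalh, sub_eq_zero]
    congr 1
    have hconv : ∏ ℓ ∈ Finset.range n,
        ((θ (of K (ℓ, (1 : Gu)))) q q - (θ (of K (ℓ, (1 : Gu)))) p p) ^ k ℓ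
        = ∏ ℓ ∈ Finset.range n,
          ((ψ (of K (ψH ℓ, (1 : Gu)))) q q - (ψ (of K (ψH ℓ, (1 : Gu)))) p p) ^ k ℓ :=
      Finset.prod_congr rfl fun ℓ hℓ => by
        rw [hθ, LieHom.comp_apply, hφy ℓ (Finset.mem_range.1 hℓ)]
    rw [hconv, mul_assoc, hcf]
    rw [prod_split (fun j => (ψ (of K (j, (1 : Gu)))) q q - (ψ (of K (j, (1 : Gu)))) p p)
      n m k k' ψH hψHlt hψHinj hkle]
  rw [LieSubmodule.mem_sup]
  exact ⟨_, hf_mem, _, hid, by abel⟩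
end

section
/- Let G = ⟨e₁,e₂⟩ ≅ ℤ² and consider commutators f = [x_{e₁}, y₁^{(k₁)}, …, y_n^{(k_n)}, x_{e₂}, y₁^{(l₁)}, …, y_n^{(l_n)}] and h = [x_{e₁}, y₁^{(k'₁)}, …, y_m^{(k'_m)}, x_{e₂}, y₁^{(l'₁)}, …, y_m^{(l'_m)}] with all exponents non-negative. To such a commutator f associate the sequence V_f = ((k₁,l₁), …, (k_n,l_n)) ∈ D(ℕ₀²). If V_f ⪯ V_h in the Higman order on D(ℕ₀²), then h ∈ ⟨f⟩^{T_G} + Id_G(UT₃⁽⁻⁾, Γ(e₁,e₂)). -/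
open FreeLieAlgebra

attribute [local instance] LieRing.ofAssociativeRing

/-! ### Auxiliary machinery for `stmt5` -/

section Stmt5Aux

open List

variable {K : Type*} [Field K]

theorem of_inj' {a b : ℕ × Gu} (h : (of K a : FL K Gu) = of K b) : a = b := by
  have := congrArg (FreeLieAlgebra.lift K
    (fun x => (MvPolynomial.X x : MvPolynomial (ℕ × Gu) K))) h
  simpa [lift_of_apply, MvPolynomial.X_injective.eq_iff] using this

theorem of_inj {a b : ℕ × Gu} : (of K a : FL K Gu) = of K b ↔ a = b :=
  ⟨of_inj', fun h => by rw [h]⟩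

theorem lnorm_nil (x : FL K Gu) : lnorm K Gu x [] = x := rfl

theorem lnorm_cons (x a : FL K Gu) (L : List (FL K Gu)) :
    lnorm K Gu x (a :: L) = lnorm K Gu ⁅x, a⁆ L := rfl

theorem lnorm_append_s5 (x : FL K Gu) (L1 L2 : List (FL K Gu)) :
    lnorm K Gu x (L1 ++ L2) = lnorm K Gu (lnorm K Gu x L1) L2 :=
  List.foldl_append

theorem lnorm_sub (x y : FL K Gu) (L : List (FL K Gu)) :
    lnorm K Gu (x - y) L = lnorm K Gu x L - lnorm K Gu y L := by
  induction L generalizing x y with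
  | nil => rfl
  | cons a L ih => rw [lnorm_cons, lnorm_cons, lnorm_cons, sub_lie, ih]

theorem lnorm_mem {I : LieIdeal K (FL K Gu)} {x : FL K Gu} (hx : x ∈ I)
    (L : List (FL K Gu)) : lnorm K Gu x L ∈ I := by
  induction L generalizing x with
  | nil => exact hx
  | cons a L ih =>
    rw [lnorm_cons]
    refine ih ?_
    rw [← lie_skew]
    exact neg_mem (I.lie_mem hx)

theorem lieHom_lnorm_s5 (φ : FL K Gu →ₗ⁅K⁆ FL K Gu) (x : FL K Gu) (L : List (FL K Gu)) :
    φ (lnorm K Gu x L) = lnorm K Gu (φ x) (L.map φ) := by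
  induction L generalizing x with
  | nil => rfl
  | cons a L ih => rw [lnorm_cons, List.map_cons, lnorm_cons, ih, φ.map_lie]

theorem isHom_lnorm {g : Gu} {x : FL K Gu} (hx : IsHom K Gu g x) {L : List (FL K Gu)}
    (hL : ∀ a ∈ L, ∃ j : ℕ, a = of K (j, (1 : Gu))) : IsHom K Gu g (lnorm K Gu x L) := by
  induction L generalizing x with
  | nil => exact hx
  | cons a L ih =>
    obtain ⟨j, rfl⟩ := hL a List.mem_cons_self
    rw [lnorm_cons]
    refine ih ?_ fun b hb => hL b (List.mem_cons_of_mem _ hb)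
    have := IsHom.lie (h := (1 : Gu)) hx (IsHom.var (K := K) (G := Gu) j 1)
    rwa [mul_one] at this

/-- Renamed run of `y`-variables. -/
noncomputable def yRunS (K : Type*) [Field K] (σ p : ℕ → ℕ) : ℕ → List (FL K Gu)
  | 0 => []
  | r + 1 => yRunS K σ p r ++ List.replicate (p r) (of K (σ r, (1 : Gu)))

theorem yRun_eq_yRunS (p : ℕ → ℕ) (r : ℕ) : yRun K Gu p r = yRunS K id p r := by
  induction r with
  | zero => rfl
  | succ r ih => rw [yRun, yRunS, ih]; rfl

theorem mem_yRunS {σ p : ℕ → ℕ} {r : ℕ} {a : FL K Gu} (ha : a ∈ yRunS K σ p r) :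
    ∃ i < r, a = of K (σ i, (1 : Gu)) := by
  induction r with
  | zero => cases ha
  | succ r ih =>
    rw [yRunS, List.mem_append] at ha
    rcases ha with ha | ha
    · obtain ⟨i, hi, rfl⟩ := ih ha
      exact ⟨i, Nat.lt_succ_of_lt hi, rfl⟩
    · exact ⟨r, Nat.lt_succ_self r, (List.eq_of_mem_replicate ha)⟩

theorem count_yRunS [DecidableEq (FL K Gu)] (σ p : ℕ → ℕ) (j r : ℕ) :
    (yRunS K σ p r).count (of K (j, (1 : Gu))) =
      ∑ i ∈ Finset.range r, if σ i = j then p i else 0 := by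
  induction r with
  | zero => simp [yRunS]
  | succ r ih =>
    rw [yRunS, List.count_append, ih, Finset.sum_range_succ]
    congr 1
    by_cases h : σ r = j
    · subst h
      simp [List.count_replicate]
    · rw [if_neg h, List.count_eq_zero]
      intro hmem
      exact h (congrArg Prod.fst (of_inj' (List.eq_of_mem_replicate hmem))).symm

theorem e1_ne_one : e1 ≠ (1 : Gu) := by decide
theorem e2_ne_one : e2 ≠ (1 : Gu) := by decide
theorem e2_ne_e1 : e2 ≠ e1 := by decide
theorem e12_ne_one : e1 * e2 ≠ (1 : Gu) := by decide

theorem utGrading_one_eq :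
    utGrading K Gu e1 e2 (1 : Gu) =
      Submodule.span K {m : M3 K | m = E3 K 0 0 ∨ m = E3 K 1 1 ∨ m = E3 K 2 2} := by
  unfold utGrading
  congr 1
  ext m
  simp only [Set.mem_setOf_eq, eq_self_iff_true, true_and]
  constructor
  · rintro (h | ⟨h1, _⟩ | ⟨h1, _⟩ | ⟨h1, _⟩)
    · exact h
    · exact absurd h1.symm e1_ne_one
    · exact absurd h1.symm e2_ne_one
    · exact absurd h1.symm e12_ne_one
  · exact fun h => Or.inl h

theorem lie_E3_diag (i j : Fin 3) : ⁅(E3 K i i : M3 K), E3 K j j⁆ = 0 := by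
  rcases eq_or_ne i j with rfl | h
  · exact lie_self _
  · rw [Ring.lie_def]
    unfold E3
    rw [Matrix.single_mul_single_of_ne (h := h), Matrix.single_mul_single_of_ne (h := h.symm),
      sub_zero]

theorem diag_comm {p q : M3 K} (hp : p ∈ utGrading K Gu e1 e2 (1 : Gu))
    (hq : q ∈ utGrading K Gu e1 e2 (1 : Gu)) : ⁅p, q⁆ = 0 := by
  rw [utGrading_one_eq] at hp hq
  induction hp, hq using Submodule.span_induction₂ with
  | mem_mem x y hx hy =>
    rcases hx with rfl | rfl | rfl <;> rcases hy with rfl | rfl | rfl <;>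
      exact lie_E3_diag _ _
  | zero_left y hy => exact zero_lie y
  | zero_right x hx => exact lie_zero x
  | add_left x y z hx hy hz h1 h2 => rw [add_lie, h1, h2, add_zero]
  | add_right x y z hx hy hz h1 h2 => rw [lie_add, h1, h2, add_zero]
  | smul_left r x y hx hy h1 => rw [smul_lie, h1, smul_zero]
  | smul_right r x y hx hy h1 => rw [lie_smul, h1, smul_zero]

theorem mem_IdUT3_iff {x : FL K Gu} :
    x ∈ IdUT3 K Gu e1 e2 ↔
      ∀ ψ : FL K Gu →ₗ⁅K⁆ M3 K,
        (∀ (i : ℕ) (g : Gu), ψ (of K (i, g)) ∈ utGrading K Gu e1 e2 g) → ψ x = 0 :=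
  Iff.rfl

theorem lie_lie_y_mem {w a b : FL K Gu} (ha : ∃ j : ℕ, a = of K (j, (1 : Gu)))
    (hb : ∃ j : ℕ, b = of K (j, (1 : Gu))) : ⁅w, ⁅a, b⁆⁆ ∈ IdUT3 K Gu e1 e2 := by
  rw [mem_IdUT3_iff]
  intro ψ hψ
  obtain ⟨j, rfl⟩ := ha
  obtain ⟨j', rfl⟩ := hb
  rw [ψ.map_lie, ψ.map_lie, diag_comm (hψ j 1) (hψ j' 1), lie_zero]

theorem lnorm_perm_sub_mem {V V' : List (FL K Gu)} (hp : V.Perm V') :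
    (∀ a ∈ V, ∃ j : ℕ, a = of K (j, (1 : Gu))) →
      ∀ w : FL K Gu, lnorm K Gu w V - lnorm K Gu w V' ∈ IdUT3 K Gu e1 e2 := by
  induction hp with
  | nil => intro _ w; simpa using zero_mem _
  | cons x h ih =>
    intro hV w
    rw [lnorm_cons, lnorm_cons]
    exact ih (fun a ha => hV a (List.mem_cons_of_mem _ ha)) ⁅w, x⁆
  | swap a b l =>
    intro hV w
    rw [lnorm_cons, lnorm_cons, lnorm_cons, lnorm_cons, ← lnorm_sub]
    have key : ⁅⁅w, b⁆, a⁆ - ⁅⁅w, a⁆, b⁆ = ⁅w, ⁅b, a⁆⁆ := by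
      rw [leibniz_lie, ← lie_skew b ⁅w, a⁆]; abel
    rw [key]
    exact lnorm_mem (lie_lie_y_mem (hV b List.mem_cons_self)
      (hV a (List.mem_cons_of_mem _ List.mem_cons_self))) l
  | trans h1 h2 ih1 ih2 =>
    intro hV w
    have hmid := ih1 hV w
    have hV2 : ∀ a ∈ _, ∃ j : ℕ, a = of K (j, (1 : Gu)) :=
      fun a ha => hV a (h1.mem_iff.mpr ha)
    have hlast := ih2 hV2 w
    have hsum := add_mem hmid hlast
    rwa [sub_add_sub_cancel] at hsum

theorem reorder_mem {U U' V V' : List (FL K Gu)} (x z : FL K Gu)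
    (hU : U.Perm U') (hV : V.Perm V')
    (hUy : ∀ a ∈ U, ∃ j : ℕ, a = of K (j, (1 : Gu)))
    (hVy : ∀ a ∈ V, ∃ j : ℕ, a = of K (j, (1 : Gu))) :
    lnorm K Gu x (U ++ z :: V) - lnorm K Gu x (U' ++ z :: V') ∈ IdUT3 K Gu e1 e2 := by
  rw [lnorm_append_s5, lnorm_append_s5, lnorm_cons, lnorm_cons]
  have h1 := lnorm_perm_sub_mem hV hVy ⁅lnorm K Gu x U, z⁆
  have hd := lnorm_perm_sub_mem hU hUy x
  have h2 : lnorm K Gu ⁅lnorm K Gu x U, z⁆ V' - lnorm K Gu ⁅lnorm K Gu x U', z⁆ V' ∈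
      IdUT3 K Gu e1 e2 := by
    rw [← lnorm_sub, ← sub_lie]
    refine lnorm_mem ?_ V'
    rw [← lie_skew]
    exact neg_mem ((IdUT3 K Gu e1 e2).lie_mem hd)
  have heq : lnorm K Gu ⁅lnorm K Gu x U, z⁆ V - lnorm K Gu ⁅lnorm K Gu x U', z⁆ V' =
      (lnorm K Gu ⁅lnorm K Gu x U, z⁆ V - lnorm K Gu ⁅lnorm K Gu x U, z⁆ V') +
      (lnorm K Gu ⁅lnorm K Gu x U, z⁆ V' - lnorm K Gu ⁅lnorm K Gu x U', z⁆ V') :=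
    (sub_add_sub_cancel _ _ _).symm
  rw [heq]
  exact add_mem h1 h2

theorem mem_tClosure {S : Set (FL K Gu)} {x : FL K Gu}
    (h : ∀ I : LieIdeal K (FL K Gu), IsTIdeal K Gu I → S ⊆ ↑I → x ∈ I) :
    x ∈ tClosure K Gu S := by
  rw [tClosure, ← SetLike.mem_coe, LieSubmodule.coe_sInf]
  rw [Set.mem_iInter₂]
  exact fun I hI => h I hI.1 hI.2

end Stmt5Aux

/-- **Lemma.** For `f = [x_{e₁}, y₁^{(k₁)},…,y_n^{(k_n)}, x_{e₂}, y₁^{(l₁)},…,y_n^{(l_n)}]` and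
`h = [x_{e₁}, y₁^{(k'₁)},…,y_m^{(k'_m)}, x_{e₂}, y₁^{(l'₁)},…,y_m^{(l'_m)}]`, if
`V_f = ((k₁,l₁),…,(k_n,l_n)) ⪯ ((k'₁,l'₁),…,(k'_m,l'_m)) = V_h` in the Higman order on
`D(ℕ₀²)`, then `h ∈ ⟨f⟩^{T_G} + Id_G(UT₃⁽⁻⁾, Γ(e₁,e₂))`. -/
theorem stmt5 (K : Type*) [Field K] (n m : ℕ) (k l k' l' : ℕ → ℕ)
    (hH : Higman (· ≤ ·) ((List.range n).map (fun i => (k i, l i)))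
      ((List.range m).map (fun i => (k' i, l' i)))) :
    lnorm K Gu (of K (0, e1)) (yRun K Gu k' m ++ of K (0, e2) :: yRun K Gu l' m) ∈
      tClosure K Gu
        {lnorm K Gu (of K (0, e1)) (yRun K Gu k n ++ of K (0, e2) :: yRun K Gu l n)} ⊔
      IdUT3 K Gu e1 e2 := by
  classical
  obtain ⟨Lc, hsub, hfa⟩ := hH
  obtain ⟨s, hs, rfl⟩ := List.sublist_map_iff.mp hsub
  have hslen : s.length = n := by
    have hl := hfa.length_eq
    simpa using hl.symm
  have hsnodup : s.Nodup := hs.nodup List.nodup_range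
  set σ : ℕ → ℕ := fun i => s.getD i 0 with hσdef
  have hσm : ∀ i < n, σ i < m := by
    intro i hi
    have hi' : i < s.length := hslen ▸ hi
    have he : σ i = s[i] := List.getD_eq_getElem s 0 hi'
    rw [he]
    exact List.mem_range.mp (hs.subset (List.getElem_mem hi'))
  have hσinj : ∀ i1 < n, ∀ i2 < n, σ i1 = σ i2 → i1 = i2 := by
    intro i1 h1 i2 h2 he
    have h1' : i1 < s.length := hslen ▸ h1
    have h2' : i2 < s.length := hslen ▸ h2
    simp only [hσdef] at he
    rw [List.getD_eq_getElem s 0 h1', List.getD_eq_getElem s 0 h2'] at he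
    exact (List.Nodup.getElem_inj_iff hsnodup).mp he
  have hki : ∀ i < n, k i ≤ k' (σ i) ∧ l i ≤ l' (σ i) := by
    intro i hi
    rw [List.forall₂_iff_get] at hfa
    obtain ⟨hlen, hget⟩ := hfa
    have h₁ : i < ((List.range n).map fun i => (k i, l i)).length := by simpa using hi
    have h₂ : i < (s.map fun i => (k' i, l' i)).length := by
      simpa [hslen] using hi
    have hle := hget i h₁ h₂
    rw [List.get_eq_getElem, List.get_eq_getElem, List.getElem_map, List.getElem_map,
      List.getElem_range] at hle
    have hs_i : σ i = s[(i : ℕ)] := List.getD_eq_getElem s 0 (hslen ▸ hi)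
    rw [← hs_i] at hle
    exact hle
  have hsum_le : ∀ (p p' : ℕ → ℕ), (∀ i < n, p i ≤ p' (σ i)) → ∀ j : ℕ,
      (∑ i ∈ Finset.range n, if σ i = j then p i else 0) ≤ p' j := by
    intro p p' hpp j
    by_cases hex : ∃ i ∈ Finset.range n, σ i = j
    · obtain ⟨i0, hi0, hji0⟩ := hex
      rw [Finset.sum_eq_single_of_mem i0 hi0 (fun b hb hne => if_neg
        (fun hbj => hne (hσinj b (Finset.mem_range.mp hb) i0 (Finset.mem_range.mp hi0)
          (hbj.trans hji0.symm))))]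
      rw [if_pos hji0, ← hji0]
      exact hpp i0 (Finset.mem_range.mp hi0)
    · rw [Finset.sum_eq_zero fun i hi => if_neg fun he => hex ⟨i, hi, he⟩]
      exact Nat.zero_le _
  have hsum_zero : ∀ (p : ℕ → ℕ) (j : ℕ), ¬ j < m →
      (∑ i ∈ Finset.range n, if σ i = j then p i else 0) = 0 := by
    intro p j hj
    refine Finset.sum_eq_zero fun i hi => if_neg fun he => hj ?_
    exact he ▸ hσm i (Finset.mem_range.mp hi)
  -- general permutation fact
  have hpermGen : ∀ (p p' : ℕ → ℕ), (∀ i < n, p i ≤ p' (σ i)) →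
      (yRun K Gu p' m).Perm
        ((yRunS K id (fun j => p' j - ∑ i ∈ Finset.range n, if σ i = j then p i else 0) m)
          ++ yRunS K σ p n) := by
    intro p p' hpp
    rw [List.perm_iff_count]
    intro a
    by_cases hay : ∃ j : ℕ, a = of K (j, (1 : Gu))
    · obtain ⟨j, rfl⟩ := hay
      rw [yRun_eq_yRunS, List.count_append, count_yRunS, count_yRunS, count_yRunS]
      simp only [id_eq]
      rw [Finset.sum_ite_eq' (Finset.range m) j, Finset.sum_ite_eq' (Finset.range m) j]
      by_cases hj : j < m
      · rw [if_pos (Finset.mem_range.mpr hj), if_pos (Finset.mem_range.mpr hj)]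
        have hle := hsum_le p p' hpp j
        omega
      · rw [if_neg (fun hc => hj (Finset.mem_range.mp hc)),
          if_neg (fun hc => hj (Finset.mem_range.mp hc)), hsum_zero p j hj]
        rfl
    · rw [List.count_eq_zero.mpr, List.count_eq_zero.mpr]
      · intro hmem
        rcases List.mem_append.mp hmem with hmem | hmem
        · obtain ⟨i, _, he⟩ := mem_yRunS hmem
          exact hay ⟨id i, he⟩
        · obtain ⟨i, _, he⟩ := mem_yRunS hmem
          exact hay ⟨σ i, he⟩
      · intro hmem
        rw [yRun_eq_yRunS] at hmem
        obtain ⟨i, _, he⟩ := mem_yRunS hmem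
        exact hay ⟨id i, he⟩
  set P := yRunS K id (fun j => k' j - ∑ i ∈ Finset.range n, if σ i = j then k i else 0) m
    with hPdef
  set Q := yRunS K id (fun j => l' j - ∑ i ∈ Finset.range n, if σ i = j then l i else 0) m
    with hQdef
  have hPy : ∀ a ∈ P, ∃ j : ℕ, a = of K (j, (1 : Gu)) := by
    intro a ha
    rw [hPdef] at ha
    obtain ⟨i, _, he⟩ := mem_yRunS ha
    exact ⟨id i, he⟩
  -- the graded substitution
  set v : ℕ × Gu → FL K Gu := fun q =>
    if q.2 = e1 ∧ q.1 = 0 then lnorm K Gu (of K (0, e1)) P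
    else if q.2 = (1 : Gu) then of K (σ q.1, (1 : Gu))
    else of K q
    with hv
  set φ := FreeLieAlgebra.lift K v with hφdef
  have hφof : ∀ q : ℕ × Gu, φ (of K q) = v q := fun q => lift_of_apply v q
  have hφ1 : φ (of K (0, e1)) = lnorm K Gu (of K (0, e1)) P := by
    rw [hφof]; simp [hv]
  have hφ2 : φ (of K (0, e2)) = of K (0, e2) := by
    rw [hφof]; simp [hv, e2_ne_e1, e2_ne_one]
  have hφy : ∀ i : ℕ, φ (of K (i, (1 : Gu))) = of K (σ i, (1 : Gu)) := by
    intro i; rw [hφof]; simp [hv, e1_ne_one.symm]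
  have hgr : IsGradedSubst K Gu φ := by
    intro i g
    rw [hφof]
    simp only [hv]
    by_cases h1 : g = e1 ∧ i = 0
    · rw [if_pos h1]
      obtain ⟨rfl, rfl⟩ := h1
      exact isHom_lnorm (IsHom.var (K := K) (G := Gu) 0 e1) hPy
    · rw [if_neg h1]
      by_cases h2 : g = (1 : Gu)
      · subst h2
        rw [if_pos rfl]
        exact IsHom.var _ _
      · rw [if_neg h2]
        exact IsHom.var _ _
  have hmapy : ∀ (p : ℕ → ℕ) (r : ℕ), (yRun K Gu p r).map φ = yRunS K σ p r := by
    intro p r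
    induction r with
    | zero => rfl
    | succ r ih =>
      rw [yRun, yRunS, List.map_append, ih, List.map_replicate, hφy]
  have hφf : φ (lnorm K Gu (of K (0, e1)) (yRun K Gu k n ++ of K (0, e2) :: yRun K Gu l n)) =
      lnorm K Gu (of K (0, e1)) ((P ++ yRunS K σ k n) ++ of K (0, e2) :: yRunS K σ l n) := by
    rw [lieHom_lnorm_s5, hφ1, List.map_append, List.map_cons, hmapy, hmapy, hφ2, ← lnorm_append_s5]
    congr 1
    simp [List.append_assoc]
  have htmem : lnorm K Gu
      (φ (lnorm K Gu (of K (0, e1)) (yRun K Gu k n ++ of K (0, e2) :: yRun K Gu l n))) Q ∈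
      tClosure K Gu
        {lnorm K Gu (of K (0, e1)) (yRun K Gu k n ++ of K (0, e2) :: yRun K Gu l n)} := by
    refine mem_tClosure fun I hT hS => ?_
    exact lnorm_mem (hT φ hgr _ (hS rfl)) Q
  have hteq : lnorm K Gu
      (φ (lnorm K Gu (of K (0, e1)) (yRun K Gu k n ++ of K (0, e2) :: yRun K Gu l n))) Q =
      lnorm K Gu (of K (0, e1))
        ((P ++ yRunS K σ k n) ++ of K (0, e2) :: (yRunS K σ l n ++ Q)) := by
    rw [hφf, ← lnorm_append_s5]
    congr 1
    simp [List.append_assoc]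
  have hperm1 : (yRun K Gu k' m).Perm (P ++ yRunS K σ k n) := by
    rw [hPdef]
    exact hpermGen k k' (fun i hi => (hki i hi).1)
  have hperm2 : (yRun K Gu l' m).Perm (yRunS K σ l n ++ Q) := by
    rw [hQdef]
    exact (hpermGen l l' (fun i hi => (hki i hi).2)).trans List.perm_append_comm
  have hU'y : ∀ a ∈ yRun K Gu k' m, ∃ j : ℕ, a = of K (j, (1 : Gu)) := by
    intro a ha
    rw [yRun_eq_yRunS] at ha
    obtain ⟨i, _, he⟩ := mem_yRunS ha
    exact ⟨id i, he⟩
  have hV'y : ∀ a ∈ yRun K Gu l' m, ∃ j : ℕ, a = of K (j, (1 : Gu)) := by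
    intro a ha
    rw [yRun_eq_yRunS] at ha
    obtain ⟨i, _, he⟩ := mem_yRunS ha
    exact ⟨id i, he⟩
  have hdiff : lnorm K Gu (of K (0, e1)) (yRun K Gu k' m ++ of K (0, e2) :: yRun K Gu l' m) -
      lnorm K Gu
        (φ (lnorm K Gu (of K (0, e1)) (yRun K Gu k n ++ of K (0, e2) :: yRun K Gu l n))) Q ∈
      IdUT3 K Gu e1 e2 := by
    rw [hteq]
    exact reorder_mem _ _ hperm1 hperm2 hU'y hV'y
  rw [LieSubmodule.mem_sup]
  exact ⟨_, htmem, _, hdiff, by abel⟩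
end

section
/- Let G = ⟨e₁,e₂⟩ ≅ ℤ² and let f and h be polynomials of type (e₁,e₂). If V_{M(f)} ⪯ V_{M(h)} in the Higman order on D(ℕ₀²), then there exists h' ∈ ⟨f⟩^{T_G} + Id_G(UT₃⁽⁻⁾, Γ(e₁,e₂)) such that M(h) = M(h'). -/
open FreeLieAlgebra

attribute [local instance 100] LieRing.ofAssociativeRing

/-- The commutator `[x_{e₁}, y₁^{(p₁)},…,y_r^{(p_r)}, x_{e₂}, y₁^{(q₁)},…,y_r^{(q_r)}]`. -/
noncomputable def monE12 (K : Type*) [Field K] (r : ℕ) (p q : ℕ → ℕ) : FL K Gu :=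
  lnorm K Gu (of K (0, e1)) (yRun K Gu p r ++ of K (0, e2) :: yRun K Gu q r)

/-- Data describing a polynomial of type `(e₁,e₂)`:
`f = Σ_{s} α_s [x_{e₁}, y₁^{(p_{1,s})},…,y_r^{(p_{r,s})}, x_{e₂}, y₁^{(q_{1,s})},…,y_r^{(q_{r,s})}]`. -/
structure E12Data (K : Type*) [Field K] where
  /-- number of `y` variables -/
  r : ℕ
  /-- number of summands -/
  t : ℕ
  /-- coefficients -/
  α : Fin t → K
  /-- exponents on the `y`'s before `x_{e₂}` -/
  p : Fin t → ℕ → ℕ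
  /-- exponents on the `y`'s after `x_{e₂}` -/
  q : Fin t → ℕ → ℕ

/-- The polynomial described by the data. -/
noncomputable def E12Data.elem {K : Type*} [Field K] (d : E12Data K) : FL K Gu :=
  ∑ s : Fin d.t, d.α s • monE12 K d.r (d.p s) (d.q s)

/-- Validity: at least one summand, all coefficients nonzero, all summands have the same
multidegree in the `y`'s, and the summands are pairwise distinct commutators. -/
def E12Data.Valid {K : Type*} [Field K] (d : E12Data K) : Prop :=
  0 < d.t ∧ (∀ s, d.α s ≠ 0) ∧
  (∀ s s' : Fin d.t, ∀ ℓ < d.r, d.p s ℓ + d.q s ℓ = d.p s' ℓ + d.q s' ℓ) ∧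
  (∀ s s' : Fin d.t, (∀ ℓ < d.r, d.p s ℓ = d.p s' ℓ ∧ d.q s ℓ = d.q s' ℓ) → s = s')

/-- The order `<'` on commutators of type `(e₁,e₂)` of the same multidegree: compare the total
degree in the `y`'s before `x_{e₂}`, then the exponent sequences lexicographically. -/
def monLT (r : ℕ) (p p' : ℕ → ℕ) : Prop :=
  (∑ i ∈ Finset.range r, p i) < (∑ i ∈ Finset.range r, p' i) ∨
  ((∑ i ∈ Finset.range r, p i) = (∑ i ∈ Finset.range r, p' i) ∧
    List.Lex (· < ·) ((List.range r).map p) ((List.range r).map p'))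

/-- `s₀` is the index of the leading monomial `M(f)` of the polynomial described by `d`. -/
def E12Data.IsLead {K : Type*} [Field K] (d : E12Data K) (s₀ : Fin d.t) : Prop :=
  ∀ s : Fin d.t, s ≠ s₀ → monLT d.r (d.p s) (d.p s₀)

/-- The sequence `V_c = ((k₁,l₁),…,(k_r,l_r)) ∈ D(ℕ₀²)` associated to a commutator. -/
def Vseq (r : ℕ) (p q : ℕ → ℕ) : List (ℕ × ℕ) := (List.range r).map (fun i => (p i, q i))

/-! ### Auxiliary development for the proof -/

-- tests
example : (e1 : Gu) ≠ 1 := by decide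
example : (e2 : Gu) ≠ 1 := by decide
example : (e1*e2 : Gu) ≠ 1 := by decide
example : (e1 : Gu) ≠ e2 := by decide
example : (e1 : Gu) ≠ e1*e2 := by decide
example : (e2 : Gu) ≠ e1*e2 := by decide

section TestA
variable {K : Type*} [Field K]

noncomputable def brkt {A : Type*} [LieRing A] (x : A) (l : List A) : A :=
  l.foldl (fun a b => ⁅a, b⁆) x

@[simp] lemma brkt_nil {A : Type*} [LieRing A] (x : A) : brkt x [] = x := rfl
@[simp] lemma brkt_cons {A : Type*} [LieRing A] (x z : A) (l : List A) :
    brkt x (z :: l) = brkt ⁅x, z⁆ l := rfl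
lemma brkt_append {A : Type*} [LieRing A] (x : A) (l₁ l₂ : List A) :
    brkt x (l₁ ++ l₂) = brkt (brkt x l₁) l₂ := List.foldl_append ..

lemma lnorm_eq_brkt (G : Type*) [CommGroup G] (x : FL K G) (l : List (FL K G)) :
    lnorm K G x l = brkt x l := rfl

lemma map_brkt {G : Type*} [CommGroup G] {A : Type*} [LieRing A] [LieAlgebra K A]
    (φ : FL K G →ₗ⁅K⁆ A) (x : FL K G) (l : List (FL K G)) :
    φ (brkt x l) = brkt (φ x) (l.map φ) := by
  induction l generalizing x with
  | nil => rfl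
  | cons z l ih => simp only [List.map_cons, brkt_cons, ← LieHom.map_lie, ih]

lemma yRun_mem {G : Type*} [CommGroup G] (p : ℕ → ℕ) (r : ℕ) {z : FL K G}
    (hz : z ∈ yRun K G p r) : ∃ n, n < r ∧ z = of K (n, (1:G)) := by
  induction r with
  | zero => simp [yRun] at hz
  | succ r ih =>
    rw [yRun, List.mem_append] at hz
    rcases hz with h | h
    · obtain ⟨n, hn, rfl⟩ := ih h; exact ⟨n, by omega, rfl⟩
    · exact ⟨r, by omega, List.eq_of_mem_replicate h⟩

lemma yRun_congr {G : Type*} [CommGroup G] {p p' : ℕ → ℕ} (r : ℕ) (h : ∀ n < r, p n = p' n) :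
    yRun K G p r = yRun K G p' r := by
  induction r with
  | zero => rfl
  | succ r ih => rw [yRun, yRun, ih (fun n hn => h n (by omega)), h r (by omega)]

end TestA

section TestB
variable {K : Type*} [Field K]

/-- diagonal matrix -/
noncomputable def D3 (u v w : K) : M3 K := u • E3 K 0 0 + v • E3 K 1 1 + w • E3 K 2 2

lemma lie_E12_D3 (u v w : K) : ⁅(E3 K 0 1 : M3 K), D3 u v w⁆ = (v - u) • E3 K 0 1 := by
  ext a b
  fin_cases a <;> fin_cases b <;>
    simp [D3, E3, Ring.lie_def, Matrix.mul_apply, Fin.sum_univ_three, Matrix.single,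
      sub_eq_add_neg]

lemma lie_E13_D3 (u v w : K) : ⁅(E3 K 0 2 : M3 K), D3 u v w⁆ = (w - u) • E3 K 0 2 := by
  ext a b
  fin_cases a <;> fin_cases b <;>
    simp [D3, E3, Ring.lie_def, Matrix.mul_apply, Fin.sum_univ_three, Matrix.single,
      sub_eq_add_neg]

lemma lie_E12_E23 : ⁅(E3 K 0 1 : M3 K), E3 K 1 2⁆ = E3 K 0 2 := by
  ext a b
  fin_cases a <;> fin_cases b <;>
    simp [E3, Ring.lie_def, Matrix.mul_apply, Fin.sum_univ_three, Matrix.single]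

end TestB

section TestC
variable {K : Type*} [Field K]

lemma utGrading_one_mem {m : M3 K} (hm : m ∈ utGrading K Gu e1 e2 1) :
    ∃ u v w : K, m = D3 u v w := by
  have hsub : {x : M3 K |
      ((1:Gu) = 1 ∧ (x = E3 K 0 0 ∨ x = E3 K 1 1 ∨ x = E3 K 2 2)) ∨
      ((1:Gu) = e1 ∧ x = E3 K 0 1) ∨ ((1:Gu) = e2 ∧ x = E3 K 1 2) ∨
      ((1:Gu) = e1 * e2 ∧ x = E3 K 0 2)} ⊆
      (insert (E3 K 0 0) (insert (E3 K 1 1) {E3 K 2 2}) : Set (M3 K)) := by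
    rintro x (⟨-, h | h | h⟩ | ⟨h, -⟩ | ⟨h, -⟩ | ⟨h, -⟩) <;>
      first
        | (subst h; simp)
        | exact absurd h (by decide)
  have h2 := Submodule.span_mono (R := K) hsub hm
  rw [Submodule.mem_span_insert] at h2
  obtain ⟨u, z, hz, rfl⟩ := h2
  rw [Submodule.mem_span_insert] at hz
  obtain ⟨v, z', hz', rfl⟩ := hz
  rw [Submodule.mem_span_singleton] at hz'
  obtain ⟨w, rfl⟩ := hz'
  exact ⟨u, v, w, by rw [D3]; abel⟩

lemma utGrading_e1_mem {m : M3 K} (hm : m ∈ utGrading K Gu e1 e2 e1) :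
    ∃ c : K, m = c • E3 K 0 1 := by
  have hsub : {x : M3 K |
      ((e1:Gu) = 1 ∧ (x = E3 K 0 0 ∨ x = E3 K 1 1 ∨ x = E3 K 2 2)) ∨
      ((e1:Gu) = e1 ∧ x = E3 K 0 1) ∨ ((e1:Gu) = e2 ∧ x = E3 K 1 2) ∨
      ((e1:Gu) = e1 * e2 ∧ x = E3 K 0 2)} ⊆ ({E3 K 0 1} : Set (M3 K)) := by
    rintro x (⟨h, -⟩ | ⟨-, h⟩ | ⟨h, -⟩ | ⟨h, -⟩) <;>
      first
        | (subst h; simp)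
        | exact absurd h (by decide)
  have h2 := Submodule.span_mono (R := K) hsub hm
  rw [Submodule.mem_span_singleton] at h2
  obtain ⟨c, rfl⟩ := h2
  exact ⟨c, rfl⟩

lemma utGrading_e2_mem {m : M3 K} (hm : m ∈ utGrading K Gu e1 e2 e2) :
    ∃ c : K, m = c • E3 K 1 2 := by
  have hsub : {x : M3 K |
      ((e2:Gu) = 1 ∧ (x = E3 K 0 0 ∨ x = E3 K 1 1 ∨ x = E3 K 2 2)) ∨
      ((e2:Gu) = e1 ∧ x = E3 K 0 1) ∨ ((e2:Gu) = e2 ∧ x = E3 K 1 2) ∨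
      ((e2:Gu) = e1 * e2 ∧ x = E3 K 0 2)} ⊆ ({E3 K 1 2} : Set (M3 K)) := by
    rintro x (⟨h, -⟩ | ⟨h, -⟩ | ⟨-, h⟩ | ⟨h, -⟩) <;>
      first
        | (subst h; simp)
        | exact absurd h (by decide)
  have h2 := Submodule.span_mono (R := K) hsub hm
  rw [Submodule.mem_span_singleton] at h2
  obtain ⟨c, rfl⟩ := h2
  exact ⟨c, rfl⟩

end TestC

section TestD
variable {K : Type*} [Field K]

lemma brkt_replicate_eval {A : Type*} [LieRing A] [LieAlgebra K A] (e z : A) (k : K)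
    (hz : ∀ c : K, ⁅c • e, z⁆ = (c * k) • e) (m : ℕ) (c : K) :
    brkt (c • e) (List.replicate m z) = (c * k ^ m) • e := by
  induction m generalizing c with
  | zero => simp
  | succ m ih =>
    rw [List.replicate_succ, brkt_cons, hz c, ih]
    congr 1
    ring

lemma brkt_yRun_eval {G : Type*} [CommGroup G] {A : Type*} [LieRing A] [LieAlgebra K A]
    (χ : FL K G →ₗ⁅K⁆ A) (e : A) (kf : ℕ → K)
    (hz : ∀ (n : ℕ) (c : K), ⁅c • e, χ (of K (n, (1:G)))⁆ = (c * kf n) • e)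
    (r : ℕ) (p : ℕ → ℕ) (c : K) :
    brkt (c • e) ((yRun K G p r).map χ) = (c * ∏ n ∈ Finset.range r, kf n ^ p n) • e := by
  induction r with
  | zero => simp [yRun]
  | succ r ih =>
    rw [yRun, List.map_append, brkt_append, ih, List.map_replicate,
      brkt_replicate_eval e _ (kf r) (hz r), Finset.prod_range_succ]
    congr 1
    ring

lemma eval_monE12 {A : Type*} [LieRing A] [LieAlgebra K A] (χ : FL K Gu →ₗ⁅K⁆ A)
    (e12 e13 : A) (kv kw : ℕ → K) (c₁ c₂ : K)
    (h1 : χ (of K (0, e1)) = c₁ • e12)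
    (hv : ∀ (n : ℕ) (c : K), ⁅c • e12, χ (of K (n, (1:Gu)))⁆ = (c * kv n) • e12)
    (hw : ∀ (n : ℕ) (c : K), ⁅c • e13, χ (of K (n, (1:Gu)))⁆ = (c * kw n) • e13)
    (h2 : ∀ c : K, ⁅c • e12, χ (of K (0, e2))⁆ = (c * c₂) • e13)
    (r : ℕ) (p q : ℕ → ℕ) :
    χ (monE12 K r p q) =
      ((c₁ * c₂ * ∏ n ∈ Finset.range r, kv n ^ p n) * ∏ n ∈ Finset.range r, kw n ^ q n) • e13 := by
  rw [monE12, lnorm_eq_brkt, map_brkt, List.map_append, List.map_cons, brkt_append, h1,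
    brkt_yRun_eval χ e12 kv hv r p c₁, brkt_cons, h2, brkt_yRun_eval χ e13 kw hw r q _]
  congr 1
  ring

end TestD

section TestE
variable {K : Type*} [Field K] {G : Type*} [CommGroup G]

lemma mem_tClosure_iff (S : Set (FL K G)) (a : FL K G) :
    a ∈ tClosure K G S ↔ ∀ I : LieIdeal K (FL K G), IsTIdeal K G I → S ⊆ ↑I → a ∈ I := by
  rw [tClosure, ← LieSubmodule.mem_toSubmodule, LieSubmodule.sInf_toSubmodule,
    Submodule.mem_sInf]
  constructor
  · intro h I hT hS; exact h _ ⟨I, ⟨hT, hS⟩, rfl⟩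
  · rintro h p ⟨I, ⟨hT, hS⟩, rfl⟩; exact h I hT hS

lemma mem_tClosure_self (S : Set (FL K G)) {a : FL K G} (ha : a ∈ S) : a ∈ tClosure K G S :=
  (mem_tClosure_iff S a).2 fun _ _ hS => hS ha

lemma isTIdeal_tClosure (S : Set (FL K G)) : IsTIdeal K G (tClosure K G S) := by
  intro φ hφ a ha
  rw [mem_tClosure_iff] at ha ⊢
  intro I hT hS
  exact hT φ hφ a (ha I hT hS)

lemma isHom_brkt_ones {l : List (FL K G)} (hl : ∀ z ∈ l, ∃ n, z = of K (n, (1:G)))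
    {g : G} {x : FL K G} (hx : IsHom K G g x) : IsHom K G g (brkt x l) := by
  induction l generalizing x with
  | nil => exact hx
  | cons z l ih =>
    obtain ⟨n, rfl⟩ := hl z (by simp)
    rw [brkt_cons]
    refine ih (fun z hz => hl z (by simp [hz])) ?_
    have h := IsHom.lie hx (IsHom.var (K := K) n (1:G))
    rwa [mul_one] at h

end TestE

section TestF
variable {K : Type*} [Field K]

/-- The substitution function. -/
noncomputable def phiFun (mf a b : ℕ → ℕ) (r' : ℕ) : ℕ × Gu → FL K Gu := fun x =>
  if x = (0, e1) then lnorm K Gu (of K (0, e1)) (yRun K Gu a r')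
  else if x = (0, e2) then lnorm K Gu (of K (0, e2)) (yRun K Gu b r')
  else if x.2 = 1 then of K (mf x.1, 1)
  else of K x

/-- The substitution. -/
noncomputable def phi (mf a b : ℕ → ℕ) (r' : ℕ) : FL K Gu →ₗ⁅K⁆ FL K Gu :=
  FreeLieAlgebra.lift K (phiFun mf a b r')

lemma phi_of (mf a b : ℕ → ℕ) (r' : ℕ) (x : ℕ × Gu) :
    phi (K := K) mf a b r' (of K x) = phiFun mf a b r' x := by
  rw [phi, FreeLieAlgebra.lift_of_apply]

lemma isGradedSubst_phi (mf a b : ℕ → ℕ) (r' : ℕ) :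
    IsGradedSubst K Gu (phi (K := K) mf a b r') := by
  intro i g
  rw [phi_of]
  unfold phiFun
  split_ifs with h1 h2 h3
  · injection h1 with hi hg
    subst hg
    rw [lnorm_eq_brkt]
    exact isHom_brkt_ones (fun z hz => (yRun_mem a r' hz).imp (fun n h => h.2)) (IsHom.var 0 e1)
  · injection h2 with hi hg
    subst hg
    rw [lnorm_eq_brkt]
    exact isHom_brkt_ones (fun z hz => (yRun_mem b r' hz).imp (fun n h => h.2)) (IsHom.var 0 e2)
  · simp only at h3
    subst h3
    exact IsHom.var _ _
  · exact IsHom.var _ _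

end TestF

section TestG
variable {K : Type*} [Field K]

lemma lex_inv : ∀ {L₁ L₂ : List ℕ}, List.Lex (· < ·) L₁ L₂ →
    ∀ {a b : ℕ} {l₁ l₂ : List ℕ}, L₁ = a :: l₁ → L₂ = b :: l₂ →
      a < b ∨ (a = b ∧ List.Lex (· < ·) l₁ l₂) := by
  intro L₁ L₂ h
  cases h with
  | nil => intro a b l₁ l₂ h1 h2; cases h1
  | rel h =>
    intro a b l₁ l₂ h1 h2
    injection h1 with h1a h1b; injection h2 with h2a h2b
    subst h1a; subst h2a
    exact Or.inl h
  | cons h =>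
    intro a b l₁ l₂ h1 h2
    injection h1 with h1a h1b; injection h2 with h2a h2b
    subst h1a; subst h2a; subst h1b; subst h2b
    exact Or.inr ⟨rfl, h⟩

lemma lex_range_map_iff : ∀ (r : ℕ) (f g : ℕ → ℕ),
    (List.Lex (· < ·) ((List.range r).map f) ((List.range r).map g) ↔
      ∃ n, n < r ∧ (∀ k < n, f k = g k) ∧ f n < g n) := by
  intro r
  induction r with
  | zero =>
    intro f g
    simp only [List.range_zero, List.map_nil]
    constructor
    · intro h; exact absurd h List.not_lex_nil
    · rintro ⟨n, hn, -, -⟩; omega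
  | succ r ih =>
    intro f g
    rw [List.range_succ_eq_map, List.map_cons, List.map_cons, List.map_map, List.map_map]
    constructor
    · intro h
      rcases lex_inv h rfl rfl with h | ⟨h0, h⟩
      · exact ⟨0, by omega, fun k hk => absurd hk (by omega), h⟩
      · obtain ⟨n, hn, hk, hlt⟩ := (ih (f ∘ Nat.succ) (g ∘ Nat.succ)).1 h
        refine ⟨n + 1, by omega, fun k hk' => ?_, hlt⟩
        match k with
        | 0 => exact h0
        | j + 1 => exact hk j (by omega)
    · rintro ⟨n, hn, hkeq, hlt⟩
      match n with
      | 0 => exact List.Lex.rel hlt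
      | j + 1 =>
        have h0 : f 0 = g 0 := hkeq 0 (by omega)
        rw [h0]
        exact List.Lex.cons ((ih (f ∘ Nat.succ) (g ∘ Nat.succ)).2
          ⟨j, by omega, fun k hk => hkeq (k + 1) (by omega), hlt⟩)

end TestG

section TestH
variable {K : Type*} [Field K]
lemma fiber_singleton {mf : ℕ → ℕ} {r : ℕ}
    (hinj : ∀ n n', n < r → n' < r → mf n = mf n' → n = n') {n : ℕ} (hn : n < r) :
    (Finset.range r).filter (fun k => mf k = mf n) = {n} := by
  ext k
  simp only [Finset.mem_filter, Finset.mem_range, Finset.mem_singleton]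
  constructor
  · rintro ⟨hk, he⟩; exact hinj k n hk hn he
  · rintro rfl; exact ⟨hn, rfl⟩

lemma prod_pow_fiber (V : ℕ → K) {mf : ℕ → ℕ} {r r' : ℕ}
    (hlt : ∀ n < r, mf n < r') (p : ℕ → ℕ) :
    ∏ j ∈ Finset.range r', V j ^ (∑ n ∈ (Finset.range r).filter (fun n => mf n = j), p n) =
      ∏ n ∈ Finset.range r, V (mf n) ^ p n := by
  rw [← Finset.prod_fiberwise_of_maps_to (g := mf) (t := Finset.range r')
      (fun n hn => Finset.mem_range.2 (hlt n (Finset.mem_range.1 hn))) (fun n => V (mf n) ^ p n)]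
  refine Finset.prod_congr rfl fun j hj => ?_
  rw [← Finset.prod_pow_eq_pow_sum]
  refine Finset.prod_congr rfl fun n hn => ?_
  rw [(Finset.mem_filter.1 hn).2]

lemma sum_fiber {mf : ℕ → ℕ} {r r' : ℕ}
    (hlt : ∀ n < r, mf n < r') (p : ℕ → ℕ) :
    ∑ j ∈ Finset.range r', (∑ n ∈ (Finset.range r).filter (fun n => mf n = j), p n) =
      ∑ n ∈ Finset.range r, p n :=
  Finset.sum_fiberwise_of_maps_to
    (fun n hn => Finset.mem_range.2 (hlt n (Finset.mem_range.1 hn))) p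

end TestH

section Aux2
variable {K : Type*} [Field K]

lemma mem_gradedIdeal {G : Type*} [CommGroup G] {A : Type*} [LieRing A] [LieAlgebra K A]
    (Γ : G → Submodule K A) (f : FL K G) :
    f ∈ gradedIdeal K G A Γ ↔
      ∀ ψ : FL K G →ₗ⁅K⁆ A, (∀ (i : ℕ) (g : G), ψ (of K (i, g)) ∈ Γ g) → ψ f = 0 :=
  Iff.rfl

noncomputable def embNat {a b : ℕ} (fe : Fin a ↪o Fin b) (n : ℕ) : ℕ :=
  if h : n < a then (fe ⟨n, h⟩ : ℕ) else b + n

lemma embNat_eq {a b : ℕ} (fe : Fin a ↪o Fin b) {n : ℕ} (h : n < a) :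
    embNat fe n = (fe ⟨n, h⟩ : ℕ) := dif_pos h

lemma embNat_lt {a b : ℕ} (fe : Fin a ↪o Fin b) {n : ℕ} (h : n < a) : embNat fe n < b := by
  rw [embNat_eq fe h]; exact (fe ⟨n, h⟩).isLt

lemma embNat_lt_iff {a b : ℕ} (fe : Fin a ↪o Fin b) {n n' : ℕ} (hn : n < a) (hn' : n' < a) :
    (embNat fe n < embNat fe n' ↔ n < n') := by
  rw [embNat_eq fe hn, embNat_eq fe hn', ← Fin.lt_def, fe.lt_iff_lt, Fin.mk_lt_mk]

lemma embNat_inj {a b : ℕ} (fe : Fin a ↪o Fin b) {n n' : ℕ} (hn : n < a) (hn' : n' < a)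
    (h : embNat fe n = embNat fe n') : n = n' := by
  have h1 := embNat_lt_iff fe hn hn'
  have h2 := embNat_lt_iff fe hn' hn
  omega

lemma Vseq_get (r : ℕ) (p q : ℕ → ℕ) (i : Fin (Vseq r p q).length) :
    (Vseq r p q).get i = (p ((i : ℕ)), q ((i : ℕ))) := by
  show (Vseq r p q)[(i : ℕ)] = _
  simp [Vseq]

end Aux2

section Aux3
variable {K : Type*} [Field K]

lemma sum_lie' {A : Type*} [LieRing A] {ι : Type*} (s : Finset ι) (f : ι → A) (z : A) :
    ⁅∑ i ∈ s, f i, z⁆ = ∑ i ∈ s, ⁅f i, z⁆ := by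
  induction s using Finset.cons_induction with
  | empty => simp
  | cons i s hi ih => rw [Finset.sum_cons, Finset.sum_cons, add_lie, ih]

lemma brkt_sum {A : Type*} [LieRing A] {ι : Type*} (s : Finset ι) (f : ι → A) (l : List A) :
    brkt (∑ i ∈ s, f i) l = ∑ i ∈ s, brkt (f i) l := by
  induction l generalizing f with
  | nil => rfl
  | cons z l ih =>
    rw [brkt_cons, sum_lie']
    exact (ih _).trans (Finset.sum_congr rfl fun i _ => (brkt_cons _ _ _).symm)

lemma brkt_smul_left {A : Type*} [LieRing A] [LieAlgebra K A] (c : K) (x : A) (l : List A) :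
    brkt (c • x) l = c • brkt x l := by
  induction l generalizing x with
  | nil => rfl
  | cons z l ih =>
    rw [brkt_cons, smul_lie]
    exact (ih _).trans (congrArg _ (brkt_cons _ _ _).symm)

lemma brkt_mem_lieIdeal {G : Type*} [CommGroup G] {I : LieIdeal K (FL K G)} {x : FL K G}
    (hx : x ∈ I) (l : List (FL K G)) : brkt x l ∈ I := by
  induction l generalizing x with
  | nil => exact hx
  | cons z l ih =>
    rw [brkt_cons]
    refine ih ?_
    have h1 : ⁅z, x⁆ ∈ I := I.lie_mem hx
    have h2 : ⁅x, z⁆ = -⁅z, x⁆ := (lie_skew x z).symm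
    rw [h2]
    exact neg_mem h1

lemma yRun_zero {G : Type*} [CommGroup G] (r : ℕ) : yRun K G (fun _ => 0) r = [] := by
  induction r with
  | zero => rfl
  | succ r ih => rw [yRun, ih, List.replicate_zero, List.append_nil]

end Aux3

section Key
variable {K : Type*} [Field K]

lemma lie_E12_smul_E23 (c : K) : ⁅(E3 K 0 1 : M3 K), c • E3 K 1 2⁆ = c • E3 K 0 2 := by
  ext a b
  fin_cases a <;> fin_cases b <;>
    simp [E3, Ring.lie_def, Matrix.mul_apply, Fin.sum_univ_three, Matrix.single]

lemma glue_mem {x y : FL K Gu} {I J : LieIdeal K (FL K Gu)} (hy : y ∈ I) (hxy : x - y ∈ J) :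
    x ∈ I ⊔ J := by
  rw [LieSubmodule.mem_sup]
  exact ⟨y, hy, x - y, hxy, by abel⟩

lemma key_membership (d : E12Data K) (mf av bv : ℕ → ℕ) (r' : ℕ)
    (hmlt : ∀ n, n < d.r → mf n < r') (dd : E12Data K)
    (hdd : dd = ⟨r', d.t, d.α,
      fun s j => av j + ∑ n ∈ (Finset.range d.r).filter (fun n => mf n = j), d.p s n,
      fun s j => bv j + ∑ n ∈ (Finset.range d.r).filter (fun n => mf n = j), d.q s n⟩) :
    dd.elem ∈ tClosure K Gu {d.elem} ⊔ IdUT3 K Gu e1 e2 := by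
  subst hdd
  refine glue_mem (y := brkt (phi (K := K) mf av (fun _ => 0) r' d.elem) (yRun K Gu bv r'))
    (brkt_mem_lieIdeal (isTIdeal_tClosure {d.elem} _ (isGradedSubst_phi mf av (fun _ => 0) r')
      d.elem (mem_tClosure_self _ (Set.mem_singleton _))) _) ?_
  rw [IdUT3, mem_gradedIdeal]
  intro ψ hψ
  rw [map_sub, sub_eq_zero, map_brkt]
  -- choose evaluation data
  have hdiag : ∀ n : ℕ, ∃ u v w : K, ψ (of K (n, (1:Gu))) = D3 u v w :=
    fun n => utGrading_one_mem (hψ n 1)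
  choose u v w hψy using hdiag
  obtain ⟨c₁, hc₁⟩ := utGrading_e1_mem (hψ 0 e1)
  obtain ⟨c₂, hc₂⟩ := utGrading_e2_mem (hψ 0 e2)
  set V : ℕ → K := fun n => v n - u n with hV
  set W : ℕ → K := fun n => w n - u n with hW
  have hv : ∀ (n : ℕ) (c : K), ⁅c • E3 K 0 1, ψ (of K (n, (1:Gu)))⁆ = (c * V n) • E3 K 0 1 := by
    intro n c
    rw [hψy n, smul_lie, lie_E12_D3, smul_smul]
  have hw : ∀ (n : ℕ) (c : K), ⁅c • E3 K 0 2, ψ (of K (n, (1:Gu)))⁆ = (c * W n) • E3 K 0 2 := by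
    intro n c
    rw [hψy n, smul_lie, lie_E13_D3, smul_smul]
  have h2 : ∀ c : K, ⁅c • E3 K 0 1, ψ (of K (0, e2))⁆ = (c * c₂) • E3 K 0 2 := by
    intro c
    rw [hc₂, smul_lie, lie_E12_smul_E23, smul_smul]
  set χ : FL K Gu →ₗ⁅K⁆ M3 K := ψ.comp (phi (K := K) mf av (fun _ => 0) r') with hχ
  have hne1 : ∀ n : ℕ, ((n, (1:Gu)) : ℕ × Gu) ≠ ((0 : ℕ), e1) := by
    intro n h
    have h' : (1:Gu) = e1 := congrArg Prod.snd h
    exact absurd h' (by decide)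
  have hne2 : ∀ n : ℕ, ((n, (1:Gu)) : ℕ × Gu) ≠ ((0 : ℕ), e2) := by
    intro n h
    have h' : (1:Gu) = e2 := congrArg Prod.snd h
    exact absurd h' (by decide)
  have hne3 : (((0 : ℕ), e2) : ℕ × Gu) ≠ ((0 : ℕ), e1) := by
    intro h
    have h' : (e2:Gu) = e1 := congrArg Prod.snd h
    exact absurd h' (by decide)
  have hχ1 : χ (of K (0, e1)) = (c₁ * ∏ j ∈ Finset.range r', V j ^ av j) • E3 K 0 1 := by
    rw [hχ, LieHom.comp_apply, phi_of]
    unfold phiFun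
    rw [if_pos rfl, lnorm_eq_brkt, map_brkt, hc₁, brkt_yRun_eval ψ (E3 K 0 1) V hv r' av c₁]
  have hχv : ∀ (n : ℕ) (c : K),
      ⁅c • E3 K 0 1, χ (of K (n, (1:Gu)))⁆ = (c * V (mf n)) • E3 K 0 1 := by
    intro n c
    rw [hχ, LieHom.comp_apply, phi_of]
    unfold phiFun
    rw [if_neg (hne1 n), if_neg (hne2 n), if_pos rfl]
    exact hv (mf n) c
  have hχw : ∀ (n : ℕ) (c : K),
      ⁅c • E3 K 0 2, χ (of K (n, (1:Gu)))⁆ = (c * W (mf n)) • E3 K 0 2 := by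
    intro n c
    rw [hχ, LieHom.comp_apply, phi_of]
    unfold phiFun
    rw [if_neg (hne1 n), if_neg (hne2 n), if_pos rfl]
    exact hw (mf n) c
  have hχ2 : ∀ c : K, ⁅c • E3 K 0 1, χ (of K (0, e2))⁆ = (c * c₂) • E3 K 0 2 := by
    intro c
    rw [hχ, LieHom.comp_apply, phi_of]
    unfold phiFun
    rw [if_neg hne3, if_pos rfl, yRun_zero]
    exact h2 c
  -- evaluate both sides
  have hmap_sum : ∀ (f : FL K Gu →ₗ⁅K⁆ FL K Gu) (g : Fin d.t → FL K Gu),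
      f (∑ i : Fin d.t, g i) = ∑ i : Fin d.t, f (g i) := by
    intro f g
    rw [← LieHom.coe_toLinearMap]
    exact map_sum _ _ _
  have hmap_sum' : ∀ (g : Fin d.t → FL K Gu), ψ (∑ i : Fin d.t, g i) = ∑ i : Fin d.t, ψ (g i) := by
    intro g
    rw [← LieHom.coe_toLinearMap]
    exact map_sum _ _ _
  simp only [E12Data.elem, hmap_sum, hmap_sum', map_smul, brkt_sum, brkt_smul_left]
  refine Finset.sum_congr rfl fun s _ => ?_
  rw [← LieHom.comp_apply ψ (phi (K := K) mf av (fun _ => 0) r'), ← hχ]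
  rw [eval_monE12 ψ (E3 K 0 1) (E3 K 0 2) V W c₁ c₂ hc₁ hv hw h2 r' _ _]
  rw [eval_monE12 χ (E3 K 0 1) (E3 K 0 2) (fun n => V (mf n)) (fun n => W (mf n))
      (c₁ * ∏ j ∈ Finset.range r', V j ^ av j) c₂ hχ1 hχv hχw hχ2 d.r (d.p s) (d.q s)]
  rw [brkt_yRun_eval ψ (E3 K 0 2) W hw r' bv, smul_smul, smul_smul]
  congr 1
  simp only [pow_add, Finset.prod_mul_distrib]
  rw [prod_pow_fiber V hmlt (d.p s), prod_pow_fiber W hmlt (d.q s)]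
  ring

end Key

/-- **Lemma.** If `f`, `h` are polynomials of type `(e₁,e₂)` and `V_{M(f)} ⪯ V_{M(h)}` in the
Higman order, then there exists `h' ∈ ⟨f⟩^{T_G} + Id_G(UT₃⁽⁻⁾, Γ(e₁,e₂))`, of type `(e₁,e₂)`,
with `M(h') = M(h)`. -/
theorem stmt6 (K : Type*) [Field K] (d d' : E12Data K) (hd : d.Valid) (hd' : d'.Valid)
    (s₀ : Fin d.t) (s₀' : Fin d'.t) (h₀ : d.IsLead s₀) (h₀' : d'.IsLead s₀')
    (hH : Higman (· ≤ ·) (Vseq d.r (d.p s₀) (d.q s₀)) (Vseq d'.r (d'.p s₀') (d'.q s₀'))) :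
    ∃ d'' : E12Data K, d''.Valid ∧
      d''.elem ∈ tClosure K Gu {d.elem} ⊔ IdUT3 K Gu e1 e2 ∧
      ∃ s₀'' : Fin d''.t, d''.IsLead s₀'' ∧
        monE12 K d''.r (d''.p s₀'') (d''.q s₀'') = monE12 K d'.r (d'.p s₀') (d'.q s₀') := by
  classical
  obtain ⟨L, hsub, hfa⟩ := hH
  have hlen1 : (Vseq d.r (d.p s₀) (d.q s₀)).length = d.r := by simp [Vseq]
  have hlen2 : (Vseq d'.r (d'.p s₀') (d'.q s₀')).length = d'.r := by simp [Vseq]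
  have hlenL : L.length = d.r := by rw [← hfa.length_eq, hlen1]
  obtain ⟨fe, hfe⟩ := List.sublist_iff_exists_fin_orderEmbedding_get_eq.mp hsub
  set mf : ℕ → ℕ := embNat fe with hmf
  have hmlt : ∀ n, n < d.r → mf n < d'.r := by
    intro n hn
    rw [hmf]
    have h := embNat_lt fe (n := n) (by omega : n < L.length)
    omega
  have hinj : ∀ n n', n < d.r → n' < d.r → mf n = mf n' → n = n' := by
    intro n n' hn hn' h
    exact embNat_inj fe (by omega) (by omega) h
  have hmono : ∀ n n', n < d.r → n' < d.r → (mf n < mf n' ↔ n < n') := by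
    intro n n' hn hn'
    exact embNat_lt_iff fe (by omega) (by omega)
  have hple : ∀ n, n < d.r → d.p s₀ n ≤ d'.p s₀' (mf n) ∧ d.q s₀ n ≤ d'.q s₀' (mf n) := by
    intro n hn
    have hn1 : n < (Vseq d.r (d.p s₀) (d.q s₀)).length := by omega
    have hnL : n < L.length := by omega
    have hget := hfa.get hn1 hnL
    rw [hfe ⟨n, hnL⟩, Vseq_get, Vseq_get] at hget
    have hv : ((fe ⟨n, hnL⟩ : Fin _) : ℕ) = mf n := (embNat_eq fe hnL).symm
    rw [hv] at hget
    rw [Prod.mk_le_mk] at hget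
    exact hget
  -- fiber facts
  have hfib : ∀ (x : ℕ → ℕ) (n : ℕ), n < d.r →
      (∑ k ∈ (Finset.range d.r).filter (fun k => mf k = mf n), x k) = x n := by
    intro x n hn
    rw [fiber_singleton hinj hn, Finset.sum_singleton]
  have hfib0 : ∀ (x : ℕ → ℕ) (j : ℕ), (∀ n, n < d.r → mf n ≠ j) →
      (∑ n ∈ (Finset.range d.r).filter (fun n => mf n = j), x n) = 0 := by
    intro x j hj
    rw [Finset.filter_false_of_mem, Finset.sum_empty]
    intro n hn
    exact hj n (Finset.mem_range.1 hn)
  set av : ℕ → ℕ := fun j =>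
    d'.p s₀' j - (∑ n ∈ (Finset.range d.r).filter (fun n => mf n = j), d.p s₀ n) with hav
  set bv : ℕ → ℕ := fun j =>
    d'.q s₀' j - (∑ n ∈ (Finset.range d.r).filter (fun n => mf n = j), d.q s₀ n) with hbv
  have hca : ∀ j, j < d'.r →
      av j + (∑ n ∈ (Finset.range d.r).filter (fun n => mf n = j), d.p s₀ n) = d'.p s₀' j := by
    intro j hj
    by_cases hex : ∃ n, n < d.r ∧ mf n = j
    · obtain ⟨n, hn, rfl⟩ := hex
      have h1 := hfib (d.p s₀) n hn
      have h2 := (hple n hn).1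
      rw [hav]
      simp only
      omega
    · push_neg at hex
      have h1 := hfib0 (d.p s₀) j hex
      rw [hav]
      simp only
      omega
  have hcb : ∀ j, j < d'.r →
      bv j + (∑ n ∈ (Finset.range d.r).filter (fun n => mf n = j), d.q s₀ n) = d'.q s₀' j := by
    intro j hj
    by_cases hex : ∃ n, n < d.r ∧ mf n = j
    · obtain ⟨n, hn, rfl⟩ := hex
      have h1 := hfib (d.q s₀) n hn
      have h2 := (hple n hn).2
      rw [hbv]
      simp only
      omega
    · push_neg at hex
      have h1 := hfib0 (d.q s₀) j hex
      rw [hbv]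
      simp only
      omega
  obtain ⟨ht, hα, hmulti, hdist⟩ := hd
  refine ⟨⟨d'.r, d.t, d.α,
      fun s j => av j + ∑ n ∈ (Finset.range d.r).filter (fun n => mf n = j), d.p s n,
      fun s j => bv j + ∑ n ∈ (Finset.range d.r).filter (fun n => mf n = j), d.q s n⟩,
    ⟨ht, hα, ?_, ?_⟩, key_membership d mf av bv d'.r hmlt _ rfl, s₀, ?_, ?_⟩
  · -- same multidegree
    intro s s' ℓ hℓ
    show (av ℓ + ∑ n ∈ (Finset.range d.r).filter (fun n => mf n = ℓ), d.p s n) +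
        (bv ℓ + ∑ n ∈ (Finset.range d.r).filter (fun n => mf n = ℓ), d.q s n) =
      (av ℓ + ∑ n ∈ (Finset.range d.r).filter (fun n => mf n = ℓ), d.p s' n) +
        (bv ℓ + ∑ n ∈ (Finset.range d.r).filter (fun n => mf n = ℓ), d.q s' n)
    have h1 : (∑ n ∈ (Finset.range d.r).filter (fun n => mf n = ℓ), d.p s n)
        + (∑ n ∈ (Finset.range d.r).filter (fun n => mf n = ℓ), d.q s n)
        = (∑ n ∈ (Finset.range d.r).filter (fun n => mf n = ℓ), d.p s' n)
        + (∑ n ∈ (Finset.range d.r).filter (fun n => mf n = ℓ), d.q s' n) := by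
      rw [← Finset.sum_add_distrib, ← Finset.sum_add_distrib]
      refine Finset.sum_congr rfl fun n hn => ?_
      exact hmulti s s' n (Finset.mem_range.1 (Finset.mem_filter.1 hn).1)
    omega
  · -- distinctness
    intro s s' h
    refine hdist s s' fun ℓ hℓ => ?_
    have h1 := h (mf ℓ) (hmlt ℓ hℓ)
    have h1p : av (mf ℓ) + (∑ n ∈ (Finset.range d.r).filter (fun n => mf n = mf ℓ), d.p s n)
        = av (mf ℓ) + (∑ n ∈ (Finset.range d.r).filter (fun n => mf n = mf ℓ), d.p s' n) := h1.1
    have h1q : bv (mf ℓ) + (∑ n ∈ (Finset.range d.r).filter (fun n => mf n = mf ℓ), d.q s n)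
        = bv (mf ℓ) + (∑ n ∈ (Finset.range d.r).filter (fun n => mf n = mf ℓ), d.q s' n) := h1.2
    have e1' := hfib (d.p s) ℓ hℓ
    have e2' := hfib (d.p s') ℓ hℓ
    have e3' := hfib (d.q s) ℓ hℓ
    have e4' := hfib (d.q s') ℓ hℓ
    constructor
    · omega
    · omega
  · -- IsLead
    intro s hs
    have hlead := h₀ s hs
    have hsum : ∀ s'' : Fin d.t,
        (∑ j ∈ Finset.range d'.r,
          (av j + ∑ n ∈ (Finset.range d.r).filter (fun n => mf n = j), d.p s'' n))
        = (∑ j ∈ Finset.range d'.r, av j) + ∑ n ∈ Finset.range d.r, d.p s'' n := by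
      intro s''
      rw [Finset.sum_add_distrib, sum_fiber hmlt]
    rcases hlead with hlt | ⟨heq, hlex⟩
    · left
      show (∑ j ∈ Finset.range d'.r,
          (av j + ∑ n ∈ (Finset.range d.r).filter (fun n => mf n = j), d.p s n)) <
        (∑ j ∈ Finset.range d'.r,
          (av j + ∑ n ∈ (Finset.range d.r).filter (fun n => mf n = j), d.p s₀ n))
      rw [hsum s, hsum s₀]
      omega
    · right
      constructor
      · show (∑ j ∈ Finset.range d'.r,
            (av j + ∑ n ∈ (Finset.range d.r).filter (fun n => mf n = j), d.p s n)) =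
          (∑ j ∈ Finset.range d'.r,
            (av j + ∑ n ∈ (Finset.range d.r).filter (fun n => mf n = j), d.p s₀ n))
        rw [hsum s, hsum s₀]
        omega
      · obtain ⟨n₀, hn₀, hk, hlt⟩ := (lex_range_map_iff d.r (d.p s) (d.p s₀)).1 hlex
        refine (lex_range_map_iff d'.r _ _).2 ⟨mf n₀, hmlt n₀ hn₀, ?_, ?_⟩
        · intro k hk'
          show av k + (∑ n ∈ (Finset.range d.r).filter (fun n => mf n = k), d.p s n)
            = av k + (∑ n ∈ (Finset.range d.r).filter (fun n => mf n = k), d.p s₀ n)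
          congr 1
          refine Finset.sum_congr rfl fun n hn => ?_
          obtain ⟨hn1, hn2⟩ := Finset.mem_filter.1 hn
          have hnr := Finset.mem_range.1 hn1
          have hlt2 : mf n < mf n₀ := by omega
          exact hk n ((hmono n n₀ hnr hn₀).1 hlt2)
        · show av (mf n₀) + (∑ n ∈ (Finset.range d.r).filter (fun n => mf n = mf n₀), d.p s n)
            < av (mf n₀) + (∑ n ∈ (Finset.range d.r).filter (fun n => mf n = mf n₀), d.p s₀ n)
          have e1' := hfib (d.p s) n₀ hn₀
          have e2' := hfib (d.p s₀) n₀ hn₀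
          omega
  · -- leading monomial equality
    show monE12 K d'.r
        (fun j => av j + ∑ n ∈ (Finset.range d.r).filter (fun n => mf n = j), d.p s₀ n)
        (fun j => bv j + ∑ n ∈ (Finset.range d.r).filter (fun n => mf n = j), d.q s₀ n)
      = monE12 K d'.r (d'.p s₀') (d'.q s₀')
    rw [monE12, monE12,
      yRun_congr (K := K) (G := Gu) d'.r (fun j hj => hca j hj),
      yRun_congr (K := K) (G := Gu) d'.r (fun j hj => hcb j hj)]
end
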